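/- Let N ≥ 1 and 1 ≤ N' ≤ N. Let p_1,...,p_{N+1}, q_1,...,q_{N+1} be reals with 0 ≤ p_1 ≤ ... ≤ p_{N+1}, 0 ≤ q_1 ≤ ... ≤ q_{N+1}, and 0 ≤ p_1 − q_1 ≤ ... ≤ p_{N+1} − q_{N+1}. Let k, l ≥ 0, set r_j = k·p_j + l·q_j, and let α, β be reals with 0 ≤ α ≤ k and −k−l+α ≤ β ≤ α. Then max over (σ_1,...,σ_{N'}) ∈ {−1,1}^{N'} of [Σ_{j=1}^{N'} σ_j·((k−α)·p_j + (l+β)·q_j) − Σ_{1≤j<j'≤N'} σ_j·σ_{j'}·r_j] ≥ max over σ ∈ {−1,1}^{N'} of [Σ_{j=1}^{N'} σ_j·((k+α)·p_j + (l−β)·q_j) − Σ_{1≤j<j'≤N'} σ_j·σ_{j'}·r_j] − 2·α·p_{N+1} + 2·β·q_{N+1}. -/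

import Mathlib

open Finset

/-- Maximum over all sign choices `(σ_1,...,σ_N) ∈ {−1,1}^N` of
`Σ_j σ_j a_j − Σ_{j<j'} σ_j σ_{j'} r_j`. -/
noncomputable def sigMax (N : ℕ) (a r : Fin N → ℝ) : ℝ :=
  Finset.univ.sup' Finset.univ_nonempty fun σ : Fin N → Bool =>
    (∑ j, (if σ j then (1 : ℝ) else -1) * a j) -
      ∑ j, ∑ j', if j < j' then
        (if σ j then (1 : ℝ) else -1) * (if σ j' then (1 : ℝ) else -1) * r j else 0

noncomputable def sigBody {n : ℕ} (a r : Fin n → ℝ) (σ : Fin n → Bool) : ℝ :=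
  (∑ j, (if σ j then (1 : ℝ) else -1) * a j) -
    ∑ j, ∑ j', if j < j' then
      (if σ j then (1 : ℝ) else -1) * (if σ j' then (1 : ℝ) else -1) * r j else 0

lemma le_sigMax {n : ℕ} (a r : Fin n → ℝ) (σ : Fin n → Bool) :
    sigBody a r σ ≤ sigMax n a r :=
  Finset.le_sup' _ (Finset.mem_univ σ)

lemma sigMax_le {n : ℕ} {a r : Fin n → ℝ} {x : ℝ} (h : ∀ σ, sigBody a r σ ≤ x) :
    sigMax n a r ≤ x :=
  Finset.sup'_le _ _ fun σ _ => h σ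

lemma sigMax_zero (a r : Fin 0 → ℝ) : sigMax 0 a r = 0 := by
  refine le_antisymm (sigMax_le fun σ => ?_) ?_
  · simp [sigBody]
  · have := le_sigMax a r (fun _ => true)
    simpa [sigBody] using this

lemma epsnot (b : Bool) : (if (!b) then (1:ℝ) else -1) = -(if b then 1 else -1) := by
  cases b <;> simp

lemma sigBody_neg {n : ℕ} (a r : Fin n → ℝ) (σ : Fin n → Bool) :
    sigBody (fun j => -(a j)) r σ = sigBody a r (fun j => !σ j) := by
  unfold sigBody
  congr 1
  · exact Finset.sum_congr rfl fun j _ => by rw [epsnot]; ring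
  · refine Finset.sum_congr rfl fun j _ => Finset.sum_congr rfl fun j' _ => ?_
    by_cases h : j < j'
    · simp only [h, if_true, epsnot]; cases σ j <;> cases σ j' <;> simp
    · simp [h]

lemma sigMax_neg {n : ℕ} (a r : Fin n → ℝ) :
    sigMax n (fun j => -(a j)) r = sigMax n a r := by
  refine le_antisymm (sigMax_le fun σ => ?_) (sigMax_le fun σ => ?_)
  · rw [sigBody_neg]; exact le_sigMax _ _ _
  · have : sigBody a r σ = sigBody (fun j => -(a j)) r (fun j => !σ j) := by
      rw [sigBody_neg]
      congr 1; funext j; simp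
    rw [this]; exact le_sigMax _ _ _

lemma sigBody_snoc {n : ℕ} (a r : Fin (n+1) → ℝ) (τ : Fin n → Bool) (b : Bool) :
    sigBody a r (Fin.snoc τ b) =
      (if b then (1:ℝ) else -1) * a (Fin.last n) +
      sigBody (fun j => a j.castSucc - (if b then (1:ℝ) else -1) * r j.castSucc)
        (fun j => r j.castSucc) τ := by
  have hlast : ∀ (x : Fin (n+1)), ¬ (Fin.last n < x) := fun x => not_lt.mpr (Fin.le_last x)
  unfold sigBody
  simp only [Fin.sum_univ_castSucc, Fin.snoc_castSucc, Fin.snoc_last,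
    Fin.castSucc_lt_castSucc_iff, Fin.castSucc_lt_last, if_true, hlast, if_false,
    Finset.sum_const_zero, add_zero, mul_sub, Finset.sum_sub_distrib, Finset.sum_add_distrib]
  ring

lemma sigMax_succ {n : ℕ} (a r : Fin (n+1) → ℝ) :
    sigMax (n+1) a r =
      max (a (Fin.last n) + sigMax n (fun j => a j.castSucc - r j.castSucc) (fun j => r j.castSucc))
          (-a (Fin.last n) + sigMax n (fun j => a j.castSucc + r j.castSucc) (fun j => r j.castSucc)) := by
  refine le_antisymm (sigMax_le fun σ => ?_) (max_le ?_ ?_)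
  · have hσ : σ = Fin.snoc (fun j => σ j.castSucc) (σ (Fin.last n)) := by
      funext j
      exact (Fin.snoc_init_self σ).symm ▸ rfl
    rw [hσ, sigBody_snoc]
    cases hb : σ (Fin.last n)
    · simp only [Bool.false_eq_true, if_false]
      have : (fun j => a j.castSucc - (-1:ℝ) * r j.castSucc) = fun j : Fin n => a j.castSucc + r j.castSucc := by
        funext j; ring
      rw [this]
      exact le_max_of_le_right (by linarith [le_sigMax (fun j : Fin n => a j.castSucc + r j.castSucc) (fun j => r j.castSucc) (fun j => σ j.castSucc)])
    · simp only [if_true]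
      have : (fun j => a j.castSucc - (1:ℝ) * r j.castSucc) = fun j : Fin n => a j.castSucc - r j.castSucc := by
        funext j; ring
      rw [this]
      exact le_max_of_le_left (by linarith [le_sigMax (fun j : Fin n => a j.castSucc - r j.castSucc) (fun j => r j.castSucc) (fun j => σ j.castSucc)])
  · have h : ∀ τ : Fin n → Bool,
        sigBody (fun j => a j.castSucc - r j.castSucc) (fun j => r j.castSucc) τ
          ≤ sigMax (n+1) a r - a (Fin.last n) := by
      intro τ
      have := le_sigMax a r (Fin.snoc τ true)
      rw [sigBody_snoc] at this
      simp only [if_true, one_mul] at this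
      linarith
    have := sigMax_le h
    linarith
  · have h : ∀ τ : Fin n → Bool,
        sigBody (fun j => a j.castSucc + r j.castSucc) (fun j => r j.castSucc) τ
          ≤ sigMax (n+1) a r + a (Fin.last n) := by
      intro τ
      have := le_sigMax a r (Fin.snoc τ false)
      rw [sigBody_snoc] at this
      simp only [Bool.false_eq_true, if_false, neg_one_mul] at this
      have heq : (fun j => a j.castSucc - -r j.castSucc) = fun j : Fin n => a j.castSucc + r j.castSucc := by
        funext j; ring
      rw [heq] at this
      linarith
    have := sigMax_le h
    linarith

lemma key : ∀ (n : ℕ) (r c : Fin n → ℝ) (m : ℕ) (C : ℝ),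
    (∀ j, 0 ≤ c j) → (∀ j, c j ≤ r j) → Monotone c → (∀ j, c j ≤ C) → 0 ≤ C →
    sigMax n (fun j => (m:ℝ) * r j + c j) r ≤
      sigMax n (fun j => (m:ℝ) * r j - c j) r + 2 * ((min m n : ℕ) : ℝ) * C := by
  intro n
  induction n with
  | zero =>
    intro r c m C _ _ _ _ hC
    rw [sigMax_zero, sigMax_zero]
    simp
  | succ n IH =>
    intro r c m C hc0 hcr hmono hcC hC
    rcases m with _ | m'
    · have e1 : (fun j : Fin (n+1) => ((0:ℕ):ℝ) * r j + c j) = c := by funext j; push_cast; ring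
      have e2 : (fun j : Fin (n+1) => ((0:ℕ):ℝ) * r j - c j) = fun j => -(c j) := by
        funext j; push_cast; ring
      rw [e1, e2, sigMax_neg]
      simp
    · set rL := r (Fin.last n) with hrL
      set cL := c (Fin.last n) with hcL
      have hcL0 : 0 ≤ cL := hc0 _
      have hcLC : cL ≤ C := hcC _
      have hc0' : ∀ j : Fin n, 0 ≤ c j.castSucc := fun j => hc0 _
      have hcr' : ∀ j : Fin n, c j.castSucc ≤ r j.castSucc := fun j => hcr _
      have hmono' : Monotone (fun j : Fin n => c j.castSucc) := fun i j h =>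
        hmono (Fin.castSucc_le_castSucc_iff.mpr h)
      have hcCL : ∀ j : Fin n, c j.castSucc ≤ cL := fun j => hmono (Fin.le_last _)
      have IH1 := IH (fun j => r j.castSucc) (fun j => c j.castSucc) m' cL
        hc0' hcr' hmono' hcCL hcL0
      have IH2 := IH (fun j => r j.castSucc) (fun j => c j.castSucc) (m'+2) cL
        hc0' hcr' hmono' hcCL hcL0
      rw [sigMax_succ, sigMax_succ]
      have e1 : (fun j : Fin n => (((m'+1:ℕ):ℝ) * r j.castSucc + c j.castSucc) - r j.castSucc)
          = fun j : Fin n => ((m':ℕ):ℝ) * r j.castSucc + c j.castSucc := by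
        funext j; push_cast; ring
      have e2 : (fun j : Fin n => (((m'+1:ℕ):ℝ) * r j.castSucc + c j.castSucc) + r j.castSucc)
          = fun j : Fin n => (((m'+2:ℕ)):ℝ) * r j.castSucc + c j.castSucc := by
        funext j; push_cast; ring
      have e3 : (fun j : Fin n => (((m'+1:ℕ):ℝ) * r j.castSucc - c j.castSucc) - r j.castSucc)
          = fun j : Fin n => ((m':ℕ):ℝ) * r j.castSucc - c j.castSucc := by
        funext j; push_cast; ring
      have e4 : (fun j : Fin n => (((m'+1:ℕ):ℝ) * r j.castSucc - c j.castSucc) + r j.castSucc)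
          = fun j : Fin n => (((m'+2:ℕ)):ℝ) * r j.castSucc - c j.castSucc := by
        funext j; push_cast; ring
      simp only [e1, e2, e3, e4]
      have hmin1 : min (m'+1) (n+1) = min m' n + 1 := Nat.succ_min_succ m' n
      have hmin2 : min (m'+2) n ≤ min (m'+1) (n+1) + 1 := by omega
      set A1 := sigMax n (fun j => ((m':ℕ):ℝ) * r j.castSucc + c j.castSucc) (fun j => r j.castSucc)
      set B1 := sigMax n (fun j => ((m':ℕ):ℝ) * r j.castSucc - c j.castSucc) (fun j => r j.castSucc)
      set A2 := sigMax n (fun j => (((m'+2:ℕ)):ℝ) * r j.castSucc + c j.castSucc) (fun j => r j.castSucc)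
      set B2 := sigMax n (fun j => (((m'+2:ℕ)):ℝ) * r j.castSucc - c j.castSucc) (fun j => r j.castSucc)
      apply max_le
      · apply le_trans (b := (((m'+1:ℕ):ℝ) * rL - cL + B1) + 2 * ((min (m'+1) (n+1) : ℕ):ℝ) * C)
        · have hcast : ((min (m'+1) (n+1) : ℕ):ℝ) = ((min m' n : ℕ):ℝ) + 1 := by
            rw [hmin1]; push_cast; ring
          rw [hcast]
          have hm0 : (0:ℝ) ≤ ((min m' n : ℕ):ℝ) := Nat.cast_nonneg _
          nlinarith [IH1]
        · exact add_le_add (le_max_left _ _) le_rfl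
      · apply le_trans (b := (-(((m'+1:ℕ):ℝ) * rL - cL) + B2) + 2 * ((min (m'+1) (n+1) : ℕ):ℝ) * C)
        · have hcast : ((min (m'+2) n : ℕ):ℝ) ≤ ((min (m'+1) (n+1) : ℕ):ℝ) + 1 := by
            exact_mod_cast hmin2
          have hm0 : (0:ℝ) ≤ ((min (m'+1) (n+1) : ℕ):ℝ) := Nat.cast_nonneg _
          nlinarith [IH2]
        · exact add_le_add (le_max_right _ _) le_rfl

theorem backlund_key_inequality (N N' : ℕ) (hN : 1 ≤ N) (hN'1 : 1 ≤ N') (hN'N : N' ≤ N)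
    (p q : Fin (N + 1) → ℝ)
    (hp0 : ∀ j, 0 ≤ p j) (hpmono : Monotone p)
    (hq0 : ∀ j, 0 ≤ q j) (hqmono : Monotone q)
    (hpq0 : ∀ j, 0 ≤ p j - q j) (hpqmono : Monotone fun j => p j - q j)
    (k l : ℝ) (hk : 0 ≤ k) (hl : 0 ≤ l)
    (r : Fin (N + 1) → ℝ) (hr : ∀ j, r j = k * p j + l * q j)
    (α β : ℝ) (hα0 : 0 ≤ α) (hαk : α ≤ k) (hβ1 : -k - l + α ≤ β) (hβ2 : β ≤ α)
    (e : Fin N' → Fin (N + 1)) (he : ∀ j, (e j : ℕ) = (j : ℕ)) :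
    sigMax N' (fun j => (k - α) * p (e j) + (l + β) * q (e j)) (fun j => r (e j)) ≥
      sigMax N' (fun j => (k + α) * p (e j) + (l - β) * q (e j)) (fun j => r (e j))
        - 2 * α * p (Fin.last N) + 2 * β * q (Fin.last N) := by
  set c : Fin N' → ℝ := fun j => α * p (e j) - β * q (e j) with hc
  set r' : Fin N' → ℝ := fun j => r (e j) with hr'
  have hαβ : (0:ℝ) ≤ α - β := by linarith
  have hcgen : ∀ (i j : Fin (N+1)), i ≤ j → α * p i - β * q i ≤ α * p j - β * q j := by
    intro i j hij
    have h1 : α * (p i - q i) ≤ α * (p j - q j) :=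
      mul_le_mul_of_nonneg_left (hpqmono hij) hα0
    have h2 : (α - β) * q i ≤ (α - β) * q j :=
      mul_le_mul_of_nonneg_left (hqmono hij) hαβ
    rw [mul_sub, mul_sub] at h1
    rw [sub_mul, sub_mul] at h2
    linarith
  have hc0 : ∀ j, 0 ≤ c j := by
    intro j
    have h1 : 0 ≤ α * (p (e j) - q (e j)) := mul_nonneg hα0 (hpq0 _)
    have h2 : 0 ≤ (α - β) * q (e j) := mul_nonneg hαβ (hq0 _)
    rw [mul_sub] at h1
    rw [sub_mul] at h2
    simp only [hc]
    linarith
  have hcr : ∀ j, c j ≤ r' j := by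
    intro j
    have h1 : 0 ≤ (k - α) * (p (e j) - q (e j)) :=
      mul_nonneg (by linarith) (hpq0 _)
    have h2 : 0 ≤ (k + l - α + β) * q (e j) :=
      mul_nonneg (by linarith) (hq0 _)
    rw [mul_sub] at h1
    simp only [hc, hr', hr]
    nlinarith
  have hmono : Monotone c := by
    intro i j hij
    exact hcgen (e i) (e j) (by rw [Fin.le_def, he, he]; exact hij)
  have hcC : ∀ j, c j ≤ α * p (Fin.last N) - β * q (Fin.last N) :=
    fun j => hcgen (e j) (Fin.last N) (Fin.le_last _)
  have hC0 : 0 ≤ α * p (Fin.last N) - β * q (Fin.last N) := by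
    have h1 : 0 ≤ α * (p (Fin.last N) - q (Fin.last N)) := mul_nonneg hα0 (hpq0 _)
    have h2 : 0 ≤ (α - β) * q (Fin.last N) := mul_nonneg hαβ (hq0 _)
    rw [mul_sub] at h1
    rw [sub_mul] at h2
    linarith
  have hmain := key N' r' c 1 (α * p (Fin.last N) - β * q (Fin.last N))
    hc0 hcr hmono hcC hC0
  have hminN' : min 1 N' = 1 := Nat.min_eq_left hN'1
  rw [hminN'] at hmain
  have eplus : (fun j => ((1:ℕ):ℝ) * r' j + c j)
      = fun j : Fin N' => (k + α) * p (e j) + (l - β) * q (e j) := by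
    funext j; simp only [hc, hr', hr]; push_cast; ring
  have eminus : (fun j => ((1:ℕ):ℝ) * r' j - c j)
      = fun j : Fin N' => (k - α) * p (e j) + (l + β) * q (e j) := by
    funext j; simp only [hc, hr', hr]; push_cast; ring
  rw [eplus, eminus] at hmain
  simp only [Nat.cast_one] at hmain
  have : sigMax N' (fun j => (k - α) * p (e j) + (l + β) * q (e j)) r' ≥
      sigMax N' (fun j => (k + α) * p (e j) + (l - β) * q (e j)) r'
        - 2 * α * p (Fin.last N) + 2 * β * q (Fin.last N) := by linarith
  exact this
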